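/- Let $R$ be a commutative ring and $E$ a finitely generated faithful projective $R$-module. Then $\mathrm{End}_R(E)$ is an Azumaya algebra over $R$: the natural map $\mathrm{End}_R(E) \otimes_R \mathrm{End}_R(E)^{op} \to \mathrm{End}_R(\mathrm{End}_R(E))$ is an isomorphism. -/

import Mathlib

open TensorProduct

/-- The natural map `A ⊗[R] Aᵐᵒᵖ → End_R A`, sending `a ⊗ b` to `x ↦ a * x * b`. -/
noncomputable def azumayaMap (R A : Type*) [CommRing R] [Ring A] [Algebra R A] :
    A ⊗[R] Aᵐᵒᵖ →ₗ[R] Module.End R A :=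
  TensorProduct.lift
    (LinearMap.mk₂ R
      (fun a b => (LinearMap.mulRight R b.unop).comp (LinearMap.mulLeft R a))
      (fun a a' b => by
        ext x
        simp [add_mul])
      (fun r a b => by
        ext x
        simp [smul_mul_assoc])
      (fun a b b' => by
        ext x
        simp [mul_add])
      (fun r a b => by
        ext x
        simp [mul_smul_comm]))

section aux

variable {R E : Type*} [CommRing R] [AddCommGroup E] [Module R E]

theorem azumayaMap_tmul_apply (a : Module.End R E) (b : (Module.End R E)ᵐᵒᵖ)
    (h : Module.End R E) (v : E) :
    azumayaMap R (Module.End R E) (a ⊗ₜ b) h v = a (h (b.unop v)) := by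
  simp [azumayaMap, Module.End.mul_apply]

theorem smulRight_add (f : E →ₗ[R] R) (u v : E) :
    f.smulRight (u + v) = f.smulRight u + f.smulRight v := by
  ext z; simp [smul_add]

theorem smulRight_smul (f : E →ₗ[R] R) (c : R) (u : E) :
    f.smulRight (c • u) = c • f.smulRight u := by
  ext z
  rw [LinearMap.smul_apply, LinearMap.smulRight_apply, LinearMap.smulRight_apply,
    smul_comm]

theorem smulRight_zero (f : E →ₗ[R] R) : f.smulRight (0 : E) = 0 := by
  ext z; simp

end aux

/-- If `E` is a finitely generated faithful projective module over a commutative ring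
`R`, then `End_R E` is an Azumaya algebra over `R`: the natural map
`End_R E ⊗[R] (End_R E)ᵐᵒᵖ → End_R (End_R E)`, sending `f ⊗ g` to `h ↦ f ∘ h ∘ g`,
is bijective. -/
theorem end_is_azumaya
    (R E : Type*) [CommRing R] [AddCommGroup E] [Module R E]
    [Module.Finite R E] [Module.Projective R E] [FaithfulSMul R E] :
    Function.Bijective (azumayaMap R (Module.End R E)) := by
  classical
  -- dual basis from finiteness and projectivity
  obtain ⟨n, f, hf⟩ := Module.Finite.exists_fin' R E
  obtain ⟨s, hs⟩ := Module.projective_lifting_property f LinearMap.id hf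
  set x : Fin n → E := fun i => f (Pi.single i 1) with hxdef
  set g : Fin n → (E →ₗ[R] R) := fun i => (LinearMap.proj i).comp s with hgdef
  have hg : ∀ v : E, ∑ i, g i v • x i = v := by
    intro v
    have h1 : ∀ i, g i v • x i = f (Pi.single i (s v i)) := by
      intro i
      rw [hxdef, hgdef, ← map_smul]
      congr 1
      ext j
      by_cases hij : i = j <;> simp [Pi.single_apply, hij]
    simp only [h1, ← map_sum, Finset.univ_sum_single]
    exact congrFun (congrArg DFunLike.coe hs) v
  -- key summation identity
  have hsum : ∀ a : Module.End R E, ∑ j, (g j).smulRight (a (x j)) = a := by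
    intro a
    ext v
    simp only [LinearMap.coe_sum, Finset.sum_apply, LinearMap.smulRight_apply]
    calc ∑ j, g j v • a (x j) = a (∑ j, g j v • x j) := by
          rw [map_sum]; simp only [map_smul]
      _ = a v := by rw [hg]
  have hsum2 : ∀ h : Module.End R E,
      ∑ j, ∑ k, g j (h (x k)) • (g k).smulRight (x j) = h := by
    intro h
    ext z
    simp only [LinearMap.coe_sum, Finset.sum_apply, LinearMap.smul_apply,
      LinearMap.smulRight_apply]
    rw [Finset.sum_comm]
    calc ∑ k, ∑ j, g j (h (x k)) • g k z • x j
        = ∑ k, g k z • h (x k) := by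
          refine Finset.sum_congr rfl fun k _ => ?_
          have e1 : ∀ j, g j (h (x k)) • g k z • x j
              = g k z • (g j (h (x k)) • x j) := fun j => smul_comm _ _ _
          rw [Finset.sum_congr rfl fun j _ => e1 j, ← Finset.smul_sum, hg]
      _ = h z := by
          conv_rhs => rw [← hg z]
          rw [map_sum]
          exact Finset.sum_congr rfl fun k _ => (map_smul h _ _).symm ▸ rfl
  -- the inverse map
  set A := Module.End R E
  set ψ : Module.End R A → A ⊗[R] Aᵐᵒᵖ := fun G =>
    ∑ j, ∑ k, ∑ l,
      ((g j).smulRight (G ((g k).smulRight (x j)) (x l))) ⊗ₜ[R]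
        (MulOpposite.op ((g l).smulRight (x k))) with hψ
  have zeroap : ∀ w : E, (0 : A) w = 0 := fun _ => rfl
  have addap : ∀ (a b : A) (w : E), (a + b) w = a w + b w := fun _ _ _ => rfl
  rw [Function.bijective_iff_has_inverse]
  refine ⟨ψ, ?_, ?_⟩
  · -- left inverse
    intro t
    induction t with
    | zero => simp [hψ, smulRight_zero, zeroap]
    | add t₁ t₂ h₁ h₂ =>
      rw [map_add]
      have : ∀ G G' : Module.End R A, ψ (G + G') = ψ G + ψ G' := by
        intro G G'
        simp only [hψ, LinearMap.add_apply, addap, smulRight_add, add_tmul,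
          Finset.sum_add_distrib]
      rw [this, h₁, h₂]
    | tmul a b =>
      simp only [hψ]
      have hterm : ∀ j k l,
          ((g j).smulRight ((azumayaMap R A (a ⊗ₜ b)) ((g k).smulRight (x j)) (x l))) ⊗ₜ[R]
              (MulOpposite.op ((g l).smulRight (x k)))
          = ((g j).smulRight (a (x j))) ⊗ₜ[R]
              (g k (b.unop (x l)) • MulOpposite.op ((g l).smulRight (x k))) := by
        intro j k l
        rw [azumayaMap_tmul_apply]
        simp only [LinearMap.smulRight_apply, map_smul]
        rw [smulRight_smul, smul_tmul]
      simp only [A] at hterm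
      simp only [hterm]
      simp only [← tmul_sum]
      rw [← sum_tmul, hsum]
      congr 1
      apply MulOpposite.unop_injective
      rw [Finset.unop_sum]
      simp only [Finset.unop_sum, MulOpposite.unop_smul, MulOpposite.unop_op]
      rw [Finset.sum_comm]
      calc ∑ l, ∑ k, g k (b.unop (x l)) • (g l).smulRight (x k)
          = ∑ l, (g l).smulRight (b.unop (x l)) := by
            refine Finset.sum_congr rfl fun l _ => ?_
            ext z
            simp only [LinearMap.coe_sum, Finset.sum_apply, LinearMap.smul_apply,
              LinearMap.smulRight_apply]
            calc ∑ k, g k (b.unop (x l)) • g l z • x k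
                = g l z • ∑ k, g k (b.unop (x l)) • x k := by
                  rw [Finset.smul_sum]
                  exact Finset.sum_congr rfl fun k _ => smul_comm _ _ _
              _ = g l z • b.unop (x l) := by rw [hg]
        _ = b.unop := hsum _
  · -- right inverse
    intro G
    ext h v
    simp only [hψ, map_sum]
    simp only [LinearMap.coe_sum, Finset.sum_apply]
    have hterm : ∀ j k l,
        (azumayaMap R A
          (((g j).smulRight (G ((g k).smulRight (x j)) (x l))) ⊗ₜ[R]
            (MulOpposite.op ((g l).smulRight (x k))))) h v
        = g l v • (g j (h (x k)) • (G ((g k).smulRight (x j))) (x l)) := by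
      intro j k l
      rw [azumayaMap_tmul_apply]
      simp only [MulOpposite.unop_op, LinearMap.smulRight_apply, map_smul,
        smul_eq_mul, mul_smul]
    simp only [A] at hterm
    simp only [hterm]
    rw [show (∑ j, ∑ k, ∑ l, g l v • (g j (h (x k)) • (G ((g k).smulRight (x j))) (x l)))
        = ∑ l, ∑ j, ∑ k, g l v • (g j (h (x k)) • (G ((g k).smulRight (x j))) (x l)) by
      rw [Finset.sum_congr rfl fun j (_ : j ∈ Finset.univ) =>
        (Finset.sum_comm (s := Finset.univ) (t := Finset.univ))]
      exact Finset.sum_comm]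
    have hfin : ∀ l, ∑ j, ∑ k, g l v • (g j (h (x k)) • (G ((g k).smulRight (x j))) (x l))
        = g l v • (G h) (x l) := by
      intro l
      rw [Finset.sum_congr rfl fun j (_ : j ∈ Finset.univ) =>
        (Finset.smul_sum (r := g l v)).symm, ← Finset.smul_sum]
      congr 1
      conv_rhs => rw [← hsum2 h]
      rw [map_sum, LinearMap.sum_apply]
      refine Finset.sum_congr rfl fun j _ => ?_
      rw [map_sum, LinearMap.sum_apply]
      refine Finset.sum_congr rfl fun k _ => ?_
      rw [map_smul, LinearMap.smul_apply]
    simp only [hfin]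
    conv_rhs => rw [← hg v, map_sum]
    simp only [map_smul]
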